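/- Let E(n×m, p^s, p^j) denote the number of n×m matrices A over Z_{p^s} such that Ax ≡ 0 (mod p^s) has exactly p^j solutions, and let Ẽ(n×m, p^s, p^j) count such matrices having at least one entry invertible mod p. Then E(n×m, p^s, p^j) = E(n×m, p^{s-1}, p^{j-m}) + Ẽ(n×m, p^s, p^j), where the first term is interpreted as 0 if j < m. -/
import Mathlib

variable {p t : ℕ}

section
variable (hp : p.Prime)
include hp

private lemma neZero_pow (k : ℕ) : NeZero (p ^ k) := ⟨pow_ne_zero _ hp.ne_zero⟩

/-- the cast-down ring hom -/
private def phi (p t : ℕ) : ZMod (p ^ (t+1)) →+* ZMod (p ^ t) :=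
  ZMod.castHom (pow_dvd_pow p (Nat.le_succ t)) _

omit hp in
private lemma phi_natCast (v : ℕ) : phi p t (v : ZMod (p ^ (t+1))) = v := map_natCast _ v

private lemma mul_p_eq_zero (z : ZMod (p ^ (t+1))) :
    (p : ZMod (p ^ (t+1))) * z = 0 ↔ phi p t z = 0 := by
  haveI := neZero_pow hp (t+1)
  haveI := neZero_pow hp t
  conv_lhs => rw [← ZMod.natCast_rightInverse z]
  rw [← Nat.cast_mul, ZMod.natCast_eq_zero_iff]
  have : phi p t z = ((z.val : ℕ) : ZMod (p ^ t)) := by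
    conv_lhs => rw [← ZMod.natCast_rightInverse z]
    exact phi_natCast z.val
  rw [this, ZMod.natCast_eq_zero_iff]
  have h1 : p ^ (t+1) = p * p ^ t := pow_succ' p t
  generalize z.val = v
  rw [h1]
  exact Nat.mul_dvd_mul_iff_left hp.pos

private lemma card_fiber (y : ZMod (p ^ t)) :
    Nat.card {a : ZMod (p ^ (t+1)) // phi p t a = y} = p := by
  haveI := neZero_pow hp (t+1)
  haveI := neZero_pow hp t
  haveI : NeZero p := ⟨hp.ne_zero⟩
  have hpt : 0 < p ^ t := pow_pos hp.pos t
  have key : ∀ c : ZMod p, phi p t ((y.val + c.val * p ^ t : ℕ) : ZMod (p ^ (t+1))) = y := by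
    intro c
    rw [phi_natCast]
    push_cast
    rw [← Nat.cast_pow, ZMod.natCast_self, mul_zero, add_zero, ZMod.natCast_rightInverse y]
  have e : ZMod p ≃ {a : ZMod (p ^ (t+1)) // phi p t a = y} := by
    refine ⟨fun c => ⟨((y.val + c.val * p ^ t : ℕ) : ZMod (p ^ (t+1))), key c⟩,
      fun a => ((a.1.val / p ^ t : ℕ) : ZMod p), ?_, ?_⟩
    · intro c
      have hlt : y.val + c.val * p ^ t < p ^ (t+1) := by
        have h1 : y.val < p ^ t := ZMod.val_lt y
        have h2 : c.val < p := ZMod.val_lt c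
        calc y.val + c.val * p ^ t < p ^ t + c.val * p ^ t := by omega
        _ = (c.val + 1) * p ^ t := by ring
        _ ≤ p * p ^ t := Nat.mul_le_mul_right _ (by omega)
        _ = p ^ (t+1) := (pow_succ' p t).symm
      simp only [ZMod.val_cast_of_lt hlt]
      rw [Nat.add_mul_div_right _ _ hpt, Nat.div_eq_of_lt (ZMod.val_lt y), zero_add,
        ZMod.natCast_rightInverse c]
    · rintro ⟨a, ha⟩
      have hval : a.val % p ^ t = y.val := by
        have : phi p t a = ((a.val : ℕ) : ZMod (p ^ t)) := by
          conv_lhs => rw [← ZMod.natCast_rightInverse a]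
          exact phi_natCast a.val
        rw [this] at ha
        rw [← ZMod.val_natCast, ha]
      have hdivlt : a.val / p ^ t < p := by
        rw [Nat.div_lt_iff_lt_mul hpt]
        calc a.val < p ^ (t+1) := ZMod.val_lt a
        _ = p * p ^ t := pow_succ' p t
      apply Subtype.ext
      simp only [ZMod.val_cast_of_lt hdivlt]
      rw [← hval, Nat.mod_add_div' a.val (p ^ t)]
      exact ZMod.natCast_rightInverse a
  rw [Nat.card_congr e.symm, Nat.card_zmod]

variable {n m : ℕ}

/-- lift a matrix over `ZMod p^t` to a "all-entries divisible by p" matrix over `ZMod p^(t+1)` -/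
private def g (p t : ℕ) (B : Matrix (Fin n) (Fin m) (ZMod (p ^ t))) :
    Matrix (Fin n) (Fin m) (ZMod (p ^ (t+1))) :=
  fun k l => ((p * (B k l).val : ℕ) : ZMod (p ^ (t+1)))

private def Phi (p t m : ℕ) (x : Fin m → ZMod (p ^ (t+1))) : Fin m → ZMod (p ^ t) :=
  fun i => phi p t (x i)

private lemma claimA (B : Matrix (Fin n) (Fin m) (ZMod (p ^ t)))
    (x : Fin m → ZMod (p ^ (t+1))) :
    (g p t B).mulVec x = 0 ↔ B.mulVec (Phi p t m x) = 0 := by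
  haveI := neZero_pow hp (t+1)
  haveI := neZero_pow hp t
  rw [funext_iff, funext_iff]
  apply forall_congr'
  intro k
  have h1 : (g p t B).mulVec x k
      = (p : ZMod (p ^ (t+1))) * ∑ l, ((B k l).val : ZMod (p ^ (t+1))) * x l := by
    simp only [Matrix.mulVec, dotProduct, g, Finset.mul_sum, Nat.cast_mul, mul_assoc]
  have h2 : phi p t (∑ l, ((B k l).val : ZMod (p ^ (t+1))) * x l)
      = B.mulVec (Phi p t m x) k := by
    rw [map_sum]
    simp only [Matrix.mulVec, dotProduct, map_mul, phi_natCast, Phi]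
    congr 1
    ext l
    congr 1
    exact ZMod.natCast_rightInverse (B k l)
  simp only [Pi.zero_apply, h1, mul_p_eq_zero hp, h2]

omit hp in
private lemma nat_card_sigma {ι : Type*} [Fintype ι] (f : ι → Type*) [∀ i, Finite (f i)] :
    Nat.card (Σ i, f i) = ∑ i, Nat.card (f i) := by
  classical
  letI : ∀ i, Fintype (f i) := fun i => Fintype.ofFinite _
  simp [Nat.card_eq_fintype_card, Fintype.card_sigma]

private lemma claimB (B : Matrix (Fin n) (Fin m) (ZMod (p ^ t))) :
    Nat.card {x : Fin m → ZMod (p ^ (t+1)) // (g p t B).mulVec x = 0}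
      = p ^ m * Nat.card {y : Fin m → ZMod (p ^ t) // B.mulVec y = 0} := by
  haveI := neZero_pow hp (t+1)
  haveI := neZero_pow hp t
  classical
  have e1 : {x : Fin m → ZMod (p ^ (t+1)) // (g p t B).mulVec x = 0}
      ≃ Σ y : {y : Fin m → ZMod (p ^ t) // B.mulVec y = 0},
          {x : Fin m → ZMod (p ^ (t+1)) // Phi p t m x = y.1} := by
    refine ⟨fun x => ⟨⟨Phi p t m x.1, (claimA hp B x.1).mp x.2⟩, ⟨x.1, rfl⟩⟩,
      fun z => ⟨z.2.1, (claimA hp B z.2.1).mpr (by rw [z.2.2]; exact z.1.2)⟩, ?_, ?_⟩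
    · intro x; rfl
    · rintro ⟨⟨y, hy⟩, ⟨x, hx⟩⟩
      simp only at hx
      subst hx
      rfl
  have fib : ∀ y : Fin m → ZMod (p ^ t),
      Nat.card {x : Fin m → ZMod (p ^ (t+1)) // Phi p t m x = y} = p ^ m := by
    intro y
    have e3 : {x : Fin m → ZMod (p ^ (t+1)) // Phi p t m x = y}
        ≃ ∀ i, {a : ZMod (p ^ (t+1)) // phi p t a = y i} :=
      (Equiv.subtypeEquivRight
        (fun x => (funext_iff : Phi p t m x = y ↔ ∀ i, phi p t (x i) = y i))).trans
        (Equiv.subtypePiEquivPi (p := fun i a => phi p t a = y i))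
    rw [Nat.card_congr e3, Nat.card_pi]
    simp only [card_fiber hp]
    simp [Finset.prod_const]
  rw [Nat.card_congr e1, nat_card_sigma]
  simp only [fib]
  rw [Finset.sum_const, Finset.card_univ, ← Nat.card_eq_fintype_card, smul_eq_mul, mul_comm]

private lemma nonunit_iff (a : ZMod (p ^ (t+1))) : ¬IsUnit a ↔ p ∣ a.val := by
  haveI := neZero_pow hp (t+1)
  have h1 : IsUnit a ↔ a.val.Coprime (p ^ (t+1)) := by
    conv_lhs => rw [← ZMod.natCast_rightInverse a]
    exact ZMod.isUnit_iff_coprime a.val (p ^ (t+1))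
  rw [h1, Nat.coprime_pow_right_iff (Nat.succ_pos t), Nat.coprime_comm,
    hp.coprime_iff_not_dvd, not_not]

private lemma g_entry_nonunit (B : Matrix (Fin n) (Fin m) (ZMod (p ^ t))) (k : Fin n)
    (l : Fin m) : ¬IsUnit (g p t B k l) := by
  haveI := neZero_pow hp (t+1)
  rw [nonunit_iff hp]
  show p ∣ ((p * (B k l).val : ℕ) : ZMod (p ^ (t+1))).val
  rw [ZMod.val_natCast, Nat.dvd_mod_iff (dvd_pow_self p (Nat.succ_ne_zero t))]
  exact dvd_mul_right _ _

private lemma g_injective : Function.Injective (g p t (n := n) (m := m)) := by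
  haveI := neZero_pow hp (t+1)
  haveI := neZero_pow hp t
  intro B B' h
  ext k l
  have h1 := congrArg ZMod.val (congrFun (congrFun h k) l)
  have hlt : ∀ b : ZMod (p ^ t), p * b.val < p ^ (t+1) := by
    intro b
    calc p * b.val < p * p ^ t := by
          exact (Nat.mul_lt_mul_left hp.pos).mpr (ZMod.val_lt b)
      _ = p ^ (t+1) := (pow_succ' p t).symm
  have h2 : (((p * (B k l).val : ℕ)) : ZMod (p ^ (t+1))).val = p * (B k l).val :=
    ZMod.val_cast_of_lt (hlt _)
  have h3 : (((p * (B' k l).val : ℕ)) : ZMod (p ^ (t+1))).val = p * (B' k l).val :=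
    ZMod.val_cast_of_lt (hlt _)
  rw [show (g p t B k l) = (((p * (B k l).val : ℕ)) : ZMod (p ^ (t+1))) from rfl,
    show (g p t B' k l) = (((p * (B' k l).val : ℕ)) : ZMod (p ^ (t+1))) from rfl,
    h2, h3] at h1
  have h4 := Nat.eq_of_mul_eq_mul_left hp.pos h1
  calc B k l = ((B k l).val : ZMod (p ^ t)) := (ZMod.natCast_rightInverse _).symm
    _ = ((B' k l).val : ZMod (p ^ t)) := by rw [h4]
    _ = B' k l := ZMod.natCast_rightInverse _

private lemma exists_g (A : Matrix (Fin n) (Fin m) (ZMod (p ^ (t+1))))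
    (hA : ∀ k l, ¬IsUnit (A k l)) : ∃ B, g p t B = A := by
  haveI := neZero_pow hp (t+1)
  haveI := neZero_pow hp t
  refine ⟨fun k l => (((A k l).val / p : ℕ) : ZMod (p ^ t)), ?_⟩
  ext k l
  have hdvd : p ∣ (A k l).val := (nonunit_iff hp _).mp (hA k l)
  set c := (A k l).val / p with hc
  show (((p * ((((c : ℕ)) : ZMod (p ^ t)).val) : ℕ)) : ZMod (p ^ (t+1))) = A k l
  rw [ZMod.val_natCast]
  have key : p * c = p * (c % p ^ t) + p ^ (t+1) * (c / p ^ t) := by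
    conv_lhs => rw [← Nat.mod_add_div c (p ^ t)]
    rw [pow_succ']
    ring
  have h2 : ((p * (c % p ^ t) : ℕ) : ZMod (p ^ (t+1))) = ((p * c : ℕ) : ZMod (p ^ (t+1))) := by
    rw [key]
    simp [Nat.cast_add, Nat.cast_mul, ZMod.natCast_self]
  rw [h2, Nat.mul_div_cancel' hdvd]
  exact ZMod.natCast_rightInverse _

end

/-- `E p s n m j` is the number of `n × m` matrices `A` over `ℤ/p^s` such that
`A x ≡ 0 (mod p^s)` has exactly `p^j` solutions. -/
noncomputable def E (p s n m j : ℕ) : ℕ :=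
  Nat.card {A : Matrix (Fin n) (Fin m) (ZMod (p ^ s)) //
    Nat.card {x : Fin m → ZMod (p ^ s) // A.mulVec x = 0} = p ^ j}

/-- `Etilde p s n m j` counts such matrices that moreover have at least one entry
invertible mod `p` (i.e. a unit of `ℤ/p^s`). -/
noncomputable def Etilde (p s n m j : ℕ) : ℕ :=
  Nat.card {A : Matrix (Fin n) (Fin m) (ZMod (p ^ s)) //
    Nat.card {x : Fin m → ZMod (p ^ s) // A.mulVec x = 0} = p ^ j ∧
      ∃ k l, IsUnit (A k l)}

theorem E_reduce (p s n m j : ℕ) (hp : p.Prime) (hs : 2 ≤ s)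
    (hn : 1 ≤ n) (hm : 1 ≤ m) (hj : j ≤ s * m) :
    E p s n m j = (if m ≤ j then E p (s - 1) n m (j - m) else 0) + Etilde p s n m j := by
  obtain ⟨t, rfl⟩ : ∃ t, s = t + 1 := ⟨s - 1, by omega⟩
  haveI := neZero_pow hp (t+1)
  haveI := neZero_pow hp t
  classical
  have hpart : E p (t+1) n m j
      = Nat.card {A : Matrix (Fin n) (Fin m) (ZMod (p ^ (t+1))) //
          (Nat.card {x : Fin m → ZMod (p ^ (t+1)) // A.mulVec x = 0} = p ^ j) ∧
          ¬∃ k l, IsUnit (A k l)} + Etilde p (t+1) n m j := by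
    calc E p (t+1) n m j
        = Nat.card ({x : {A : Matrix (Fin n) (Fin m) (ZMod (p ^ (t+1))) //
            Nat.card {x : Fin m → ZMod (p ^ (t+1)) // A.mulVec x = 0} = p ^ j} //
            ∃ k l, IsUnit (x.1 k l)} ⊕
          {x : {A : Matrix (Fin n) (Fin m) (ZMod (p ^ (t+1))) //
            Nat.card {x : Fin m → ZMod (p ^ (t+1)) // A.mulVec x = 0} = p ^ j} //
            ¬∃ k l, IsUnit (x.1 k l)}) := Nat.card_congr (Equiv.sumCompl _).symm
      _ = Nat.card {x : {A : Matrix (Fin n) (Fin m) (ZMod (p ^ (t+1))) //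
            Nat.card {x : Fin m → ZMod (p ^ (t+1)) // A.mulVec x = 0} = p ^ j} //
            ∃ k l, IsUnit (x.1 k l)} +
          Nat.card {x : {A : Matrix (Fin n) (Fin m) (ZMod (p ^ (t+1))) //
            Nat.card {x : Fin m → ZMod (p ^ (t+1)) // A.mulVec x = 0} = p ^ j} //
            ¬∃ k l, IsUnit (x.1 k l)} := Nat.card_sum
      _ = Etilde p (t+1) n m j +
          Nat.card {A : Matrix (Fin n) (Fin m) (ZMod (p ^ (t+1))) //
            (Nat.card {x : Fin m → ZMod (p ^ (t+1)) // A.mulVec x = 0} = p ^ j) ∧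
            ¬∃ k l, IsUnit (A k l)} :=
        congrArg₂ HAdd.hAdd
          (Nat.card_congr (Equiv.subtypeSubtypeEquivSubtypeInter
            (fun A : Matrix (Fin n) (Fin m) (ZMod (p ^ (t+1))) =>
              Nat.card {x : Fin m → ZMod (p ^ (t+1)) // A.mulVec x = 0} = p ^ j)
            (fun A => ∃ k l, IsUnit (A k l))))
          (Nat.card_congr (Equiv.subtypeSubtypeEquivSubtypeInter
            (fun A : Matrix (Fin n) (Fin m) (ZMod (p ^ (t+1))) =>
              Nat.card {x : Fin m → ZMod (p ^ (t+1)) // A.mulVec x = 0} = p ^ j)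
            (fun A => ¬∃ k l, IsUnit (A k l))))
      _ = _ := add_comm _ _
  rw [hpart]
  congr 1
  by_cases hmj : m ≤ j
  · rw [if_pos hmj]
    have hcnt : ∀ B : Matrix (Fin n) (Fin m) (ZMod (p ^ t)),
        Nat.card {y : Fin m → ZMod (p ^ t) // B.mulVec y = 0} = p ^ (j - m) →
        Nat.card {x : Fin m → ZMod (p ^ (t+1)) // (g p t B).mulVec x = 0} = p ^ j := by
      intro B hB
      rw [claimB hp, hB, ← pow_add, Nat.add_sub_cancel' hmj]
    refine (Nat.card_congr (Equiv.ofBijective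
      (fun B : {B : Matrix (Fin n) (Fin m) (ZMod (p ^ t)) //
          Nat.card {y : Fin m → ZMod (p ^ t) // B.mulVec y = 0} = p ^ (j - m)} =>
        (⟨g p t B.1, hcnt B.1 B.2,
          not_exists.mpr fun k => not_exists.mpr fun l => g_entry_nonunit hp B.1 k l⟩ :
        {A : Matrix (Fin n) (Fin m) (ZMod (p ^ (t+1))) //
          (Nat.card {x : Fin m → ZMod (p ^ (t+1)) // A.mulVec x = 0} = p ^ j) ∧
          ¬∃ k l, IsUnit (A k l)})) ⟨?_, ?_⟩)).symm
    · intro B B' h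
      exact Subtype.ext (g_injective hp (congrArg Subtype.val h))
    · rintro ⟨A, hPA, hQA⟩
      push_neg at hQA
      obtain ⟨B, rfl⟩ := exists_g hp A hQA
      have hcount := hPA
      rw [claimB hp] at hcount
      have hB : Nat.card {y : Fin m → ZMod (p ^ t) // B.mulVec y = 0} = p ^ (j - m) := by
        have hpj : p ^ j = p ^ m * p ^ (j - m) := by
          rw [← pow_add, Nat.add_sub_cancel' hmj]
        rw [hpj] at hcount
        exact Nat.eq_of_mul_eq_mul_left (pow_pos hp.pos m) hcount
      exact ⟨⟨B, hB⟩, Subtype.ext rfl⟩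
  · rw [if_neg hmj]
    haveI : IsEmpty {A : Matrix (Fin n) (Fin m) (ZMod (p ^ (t+1))) //
          (Nat.card {x : Fin m → ZMod (p ^ (t+1)) // A.mulVec x = 0} = p ^ j) ∧
          ¬∃ k l, IsUnit (A k l)} := by
      constructor
      rintro ⟨A, hPA, hQA⟩
      push_neg at hQA
      obtain ⟨B, rfl⟩ := exists_g hp A hQA
      rw [claimB hp] at hPA
      haveI : Nonempty {y : Fin m → ZMod (p ^ t) // B.mulVec y = 0} :=
        ⟨⟨0, Matrix.mulVec_zero B⟩⟩
      have hpos : 0 < Nat.card {y : Fin m → ZMod (p ^ t) // B.mulVec y = 0} :=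
        Nat.card_pos
      have hle : p ^ m ≤ p ^ j := by
        calc p ^ m = p ^ m * 1 := (mul_one _).symm
          _ ≤ p ^ m * Nat.card {y : Fin m → ZMod (p ^ t) // B.mulVec y = 0} :=
            Nat.mul_le_mul_left _ hpos
          _ = p ^ j := hPA
      exact hmj ((Nat.pow_le_pow_iff_right hp.one_lt).mp hle)
    exact Nat.card_of_isEmpty
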